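/- Suppose a multi-labeling of an l-graph has at most l/2 distinct p-labels and excess Δ. Then Σ_{j : N_j ≥ 3} N_j ≤ 6Δ − 6, where N_j is the number of appearances of j as an n-label. Consequently the number of n-vertices carrying some label j with N_j ≥ 3 is at most 6Δ − 6. -/

import Mathlib

open Finset

/-- Number of edges of the `l`-graph cycle whose `p`-vertex endpoint has label `i`
and whose `n`-vertex endpoint contains `j` in its label tuple. The `s`-th `n`-vertex
sits between the `s`-th and `(s+1)`-th `p`-vertices. -/
def edgeCount {l : ℕ} [NeZero l] (pl : Fin l → ℕ) (nl : Fin l → Finset ℕ) (i j : ℕ) : ℕ :=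
  ∑ s : Fin l, ((if pl s = i ∧ j ∈ nl s then 1 else 0) +
    (if pl (s + 1) = i ∧ j ∈ nl s then 1 else 0))

/-- A multi-labeling of the `l`-graph (a cycle alternating between `l` `p`-vertices and
`l` `n`-vertices): each `p`-vertex gets a label, each `n`-vertex gets a set of between
1 and `D` distinct labels; consecutive `p`-vertices have distinct labels, and every
edge count `b_{ij}` is even. -/
def IsMultiLabeling (l D : ℕ) [NeZero l] (pl : Fin l → ℕ) (nl : Fin l → Finset ℕ) : Prop :=
  (∀ s : Fin l, pl s ≠ pl (s + 1)) ∧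
  (∀ s : Fin l, 1 ≤ (nl s).card ∧ (nl s).card ≤ D) ∧
  (∀ i j : ℕ, Even (edgeCount pl nl i j))

/-- `N_j`: the number of `n`-vertices whose label tuple contains `j`. -/
def nLabelCount {l : ℕ} (nl : Fin l → Finset ℕ) (j : ℕ) : ℕ :=
  (Finset.univ.filter fun s => j ∈ nl s).card

/-- `m`: the total number of distinct `p`-labels plus distinct `n`-labels. -/
def distinctLabels {l : ℕ} (pl : Fin l → ℕ) (nl : Fin l → Finset ℕ) : ℕ :=
  (Finset.univ.image pl).card + (Finset.univ.biUnion nl).card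

/-- The excess `Δ = (l + Σ_s d_s)/2 + 1 − m` of a multi-labeling. -/
noncomputable def excess {l : ℕ} (pl : Fin l → ℕ) (nl : Fin l → Finset ℕ) : ℝ :=
  ((l : ℝ) + ∑ s : Fin l, ((nl s).card : ℝ)) / 2 + 1 - distinctLabels pl nl

theorem stmt17 (l D : ℕ) [NeZero l] (hl : 2 ≤ l)
    (pl : Fin l → ℕ) (nl : Fin l → Finset ℕ)
    (h : IsMultiLabeling l D pl nl)
    (hfew : 2 * (Finset.univ.image pl).card ≤ l) :
    (∑ j ∈ Finset.univ.biUnion nl,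
        (if 3 ≤ nLabelCount nl j then (nLabelCount nl j : ℝ) else 0)) ≤
      6 * excess pl nl - 6 ∧
    (((Finset.univ.filter fun s : Fin l =>
        ∃ j ∈ nl s, 3 ≤ nLabelCount nl j).card : ℕ) : ℝ) ≤
      6 * excess pl nl - 6 := by
  obtain ⟨hdist, hcard, heven⟩ := h
  set B := Finset.univ.biUnion nl with hB
  -- every appearing n-label appears at least twice
  have hN2 : ∀ j ∈ B, 2 ≤ nLabelCount nl j := by
    intro j hj
    obtain ⟨s, -, hjs⟩ := Finset.mem_biUnion.mp hj
    by_contra hlt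
    push_neg at hlt
    have hsF : s ∈ Finset.univ.filter fun t => j ∈ nl t := by
      simp [hjs]
    have hone : (Finset.univ.filter fun t => j ∈ nl t).card = 1 := by
      have h1 : 1 ≤ (Finset.univ.filter fun t => j ∈ nl t).card :=
        Finset.card_pos.mpr ⟨s, hsF⟩
      unfold nLabelCount at hlt
      omega
    have hsingle : (Finset.univ.filter fun t => j ∈ nl t) = {s} :=
      Finset.eq_singleton_iff_unique_mem.mpr ⟨hsF, fun t ht => by
        have := Finset.card_eq_one.mp hone
        obtain ⟨a, ha⟩ := this
        rw [ha] at ht hsF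
        simp at ht hsF; omega⟩
    have hnot : ∀ t : Fin l, t ≠ s → j ∉ nl t := by
      intro t hts hjt
      have : t ∈ ({s} : Finset (Fin l)) := by
        rw [← hsingle]; simp [hjt]
      simp at this; exact hts this
    have hodd : edgeCount pl nl (pl s) j = 1 := by
      unfold edgeCount
      rw [Finset.sum_eq_single_of_mem s (Finset.mem_univ s)]
      · have hne : pl (s + 1) ≠ pl s := (hdist s).symm
        simp [hjs, hne]
      · intro t _ hts
        simp [hnot t hts]
    have := heven (pl s) j
    rw [hodd] at this
    exact (Nat.not_even_iff.mpr rfl) this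
  -- double counting
  have hsum : ∑ s : Fin l, (nl s).card = ∑ j ∈ B, nLabelCount nl j := by
    have : ∀ j, nLabelCount nl j = ∑ s : Fin l, if j ∈ nl s then 1 else 0 := by
      intro j; unfold nLabelCount; rw [Finset.card_filter]
    simp_rw [this]
    rw [Finset.sum_comm]
    refine Finset.sum_congr rfl fun s _ => ?_
    rw [← Finset.card_filter, Finset.filter_mem_eq_inter,
      Finset.inter_eq_right.mpr
        (fun x hx => Finset.mem_biUnion.mpr ⟨s, Finset.mem_univ s, hx⟩)]
  set T := B.filter (fun j => 3 ≤ nLabelCount nl j) with hT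
  set T' := B.filter (fun j => ¬ 3 ≤ nLabelCount nl j) with hT'
  have hsplitc : T.card + T'.card = B.card :=
    Finset.card_filter_add_card_filter_not (s := B) _
  have hsplits : (∑ j ∈ T, nLabelCount nl j) + (∑ j ∈ T', nLabelCount nl j)
      = ∑ j ∈ B, nLabelCount nl j :=
    Finset.sum_filter_add_sum_filter_not B _ _
  have hTb : 3 * T.card ≤ ∑ j ∈ T, nLabelCount nl j := by
    rw [mul_comm]
    calc T.card * 3 = T.card • 3 := by rw [smul_eq_mul]
    _ ≤ _ := Finset.card_nsmul_le_sum T _ 3 (fun j hj => (Finset.mem_filter.mp hj).2)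
  have hT'b : 2 * T'.card ≤ ∑ j ∈ T', nLabelCount nl j := by
    rw [mul_comm]
    calc T'.card * 2 = T'.card • 2 := by rw [smul_eq_mul]
    _ ≤ _ := Finset.card_nsmul_le_sum T' _ 2
      (fun j hj => hN2 j (Finset.mem_filter.mp hj).1)
  -- key natural-number inequality
  have hkey : (∑ j ∈ T, nLabelCount nl j) + 6 * distinctLabels pl nl
      ≤ 3 * l + 3 * ∑ s : Fin l, (nl s).card := by
    unfold distinctLabels
    rw [hsum, ← hB]
    omega
  -- express the first sum
  have hfirst : (∑ j ∈ B, (if 3 ≤ nLabelCount nl j then (nLabelCount nl j : ℝ) else 0))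
      = ((∑ j ∈ T, nLabelCount nl j : ℕ) : ℝ) := by
    rw [Finset.sum_filter]
    push_cast
    rfl
  have hex : 6 * excess pl nl - 6
      = 3 * (l : ℝ) + 3 * ((∑ s : Fin l, (nl s).card : ℕ) : ℝ)
        - 6 * (distinctLabels pl nl : ℝ) := by
    unfold excess
    push_cast
    ring
  have hmain : ((∑ j ∈ T, nLabelCount nl j : ℕ) : ℝ) ≤ 6 * excess pl nl - 6 := by
    rw [hex]
    have := hkey
    have h2 : (((∑ j ∈ T, nLabelCount nl j) + 6 * distinctLabels pl nl : ℕ) : ℝ)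
        ≤ ((3 * l + 3 * ∑ s : Fin l, (nl s).card : ℕ) : ℝ) := Nat.cast_le.mpr hkey
    push_cast at h2 ⊢
    linarith
  constructor
  · rw [hfirst]; exact hmain
  · refine le_trans ?_ hmain
    rw [Nat.cast_le]
    calc (Finset.univ.filter fun s : Fin l => ∃ j ∈ nl s, 3 ≤ nLabelCount nl j).card
        ≤ (T.biUnion fun j => Finset.univ.filter fun s => j ∈ nl s).card := by
          apply Finset.card_le_card
          intro s hs
          obtain ⟨j, hjs, hj3⟩ := (Finset.mem_filter.mp hs).2
          refine Finset.mem_biUnion.mpr ⟨j, ?_, by simp [hjs]⟩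
          exact Finset.mem_filter.mpr
            ⟨Finset.mem_biUnion.mpr ⟨s, Finset.mem_univ s, hjs⟩, hj3⟩
      _ ≤ ∑ j ∈ T, nLabelCount nl j := Finset.card_biUnion_le
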